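/- Define the monomial basis (M_σ) of ℤS by σ = Σ_{σ ≤ w} M_w (Möbius inversion over the right weak order). Then the coproduct δ of the Malvenuto–Reutenauer Hopf algebra satisfies δ(M_σ) = Σ_{σ = v △ u} M_u ⊗ M_v, the sum over all factorizations of σ as a left shifted concatenation. -/

import Mathlib

/-- Standardization (0-based): replace each letter by its rank among the letters of `w`. -/
def stW (w : List ℕ) : List ℕ := w.map (fun x => (w.filter (· < x)).length)

/-- `w` is the one-line word of a permutation of `{0, …, n-1}` where `n = w.length`. -/
def IsPermWord (w : List ℕ) : Prop := w.Perm (List.range w.length)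

/-- The inversion set of a word: pairs `(j, i)` with `j > i` and `j` to the left of `i`. -/
def invSet (w : List ℕ) : Set (ℕ × ℕ) :=
  {p | p.2 < p.1 ∧ ∃ k l : ℕ, k < l ∧ w[k]? = some p.1 ∧ w[l]? = some p.2}

/-- The right weak order: inclusion of inversion sets. -/
def weakLe (u v : List ℕ) : Prop := invSet u ⊆ invSet v

/-- Left shifted concatenation `v △ u`: the word `v̄ u`, `v̄` being `v` shifted by `|u|`. -/
def triangle (v u : List ℕ) : List ℕ := v.map (· + u.length) ++ u

/-- Right shifted concatenation `u □ v`: the word `u v̄`, `v̄` being `v` shifted by `|u|`. -/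
def squareC (u v : List ℕ) : List ℕ := u ++ v.map (· + u.length)

lemma nodup_of_isPermWord {w : List ℕ} (h : IsPermWord w) : w.Nodup :=
  h.nodup_iff.mpr (List.nodup_range)

/-- Standardizing a word with distinct letters yields a permutation word. -/
lemma isPermWord_stW {w : List ℕ} (h : w.Nodup) : IsPermWord (stW w) := by
  show (stW w).Perm (List.range (stW w).length)
  classical
  set f : ℕ → ℕ := fun x => (w.filter (· < x)).length with hf
  have hcard : ∀ x, f x = (w.toFinset.filter (· < x)).card := by
    intro x
    rw [hf]
    simp only
    rw [← List.toFinset_card_of_nodup (h.filter _)]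
    congr 1
    ext z
    simp [List.mem_filter]
  have hmono : ∀ x ∈ w, ∀ y ∈ w, x < y → f x < f y := by
    intro x hx y hy hxy
    rw [hcard, hcard]
    apply Finset.card_lt_card
    constructor
    · intro z hz
      simp only [Finset.mem_filter, decide_eq_true_eq] at hz ⊢
      exact ⟨hz.1, lt_trans hz.2 hxy⟩
    · intro hcon
      have hxmem : x ∈ w.toFinset.filter (· < y) := by
        simp only [Finset.mem_filter, decide_eq_true_eq]
        exact ⟨List.mem_toFinset.2 hx, hxy⟩
      have := hcon hxmem
      simp only [Finset.mem_filter, decide_eq_true_eq] at this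
      exact lt_irrefl x this.2
  have hinj : ∀ x ∈ w, ∀ y ∈ w, f x = f y → x = y := by
    intro x hx y hy hxy
    rcases lt_trichotomy x y with h1 | h1 | h1
    · exact absurd hxy (Nat.ne_of_lt (hmono x hx y hy h1))
    · exact h1
    · exact absurd hxy.symm (Nat.ne_of_lt (hmono y hy x hx h1))
  have hltn : ∀ x ∈ w, f x < w.length := by
    intro x hx
    rw [hf]
    simp only
    refine List.length_filter_lt_length_iff_exists.2 ⟨x, hx, by simp⟩
  have hnodup : (stW w).Nodup := List.Nodup.map_on hinj h
  have hlen : (stW w).length = w.length := by simp [stW]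
  rw [hlen]
  refine (List.perm_ext_iff_of_nodup hnodup (List.nodup_range)).2 ?_
  intro k
  simp only [List.mem_range]
  constructor
  · rintro hk
    simp only [stW, List.mem_map] at hk
    obtain ⟨x, hx, rfl⟩ := hk
    exact hltn x hx
  · intro hk
    -- surjectivity via cardinality
    have himage : w.toFinset.image f = Finset.range w.length := by
      apply Finset.eq_of_subset_of_card_le
      · intro m hm
        simp only [Finset.mem_image, List.mem_toFinset] at hm
        obtain ⟨x, hx, rfl⟩ := hm
        exact Finset.mem_range.2 (hltn x hx)
      · rw [Finset.card_range, Finset.card_image_of_injOn ?_]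
        · rw [List.toFinset_card_of_nodup h]
        · intro x hx y hy
          exact hinj x (List.mem_toFinset.1 hx) y (List.mem_toFinset.1 hy)
    have : k ∈ w.toFinset.image f := by rw [himage]; exact Finset.mem_range.2 hk
    simp only [Finset.mem_image, List.mem_toFinset] at this
    obtain ⟨x, hx, rfl⟩ := this
    simp only [stW, List.mem_map]
    exact ⟨x, hx, rfl⟩


lemma isPermWord_stW_filter {w : List ℕ} (h : IsPermWord w)
    (p : ℕ → Bool) : IsPermWord (stW (w.filter p)) :=
  isPermWord_stW ((nodup_of_isPermWord h).filter _)

lemma isPermWord_filter_lt {w : List ℕ} (h : IsPermWord w) (i : ℕ) :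
    IsPermWord (w.filter (· < i)) := by
  have h1 : (w.filter (· < i)).Perm ((List.range w.length).filter (· < i)) := h.filter _
  have h2 : ((List.range w.length).filter (· < i)).Perm (List.range (min i w.length)) := by
    refine (List.perm_ext_iff_of_nodup ((List.nodup_range).filter _) (List.nodup_range)).2 ?_
    intro x
    simp only [List.mem_filter, List.mem_range, decide_eq_true_eq, lt_min_iff]
    tauto
  have h3 := h1.trans h2
  have hl : (w.filter (· < i)).length = min i w.length := by simpa using h3.length_eq
  unfold IsPermWord
  rw [hl]; exact h3

/-- The type of permutation words. -/
abbrev PW : Type := {w : List ℕ // IsPermWord w}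

/-- `ℤS`: the free `ℤ`-module on the set of all permutations. -/
abbrev ZS : Type := PW →₀ ℤ

open scoped TensorProduct

/-- The coproduct on a basis permutation:
`δ(σ) = Σ_{0 ≤ i ≤ n} σ|{1,…,i} ⊗ st(σ|{i+1,…,n})`. -/
noncomputable def deltaWord (w : PW) : ZS ⊗[ℤ] ZS :=
  ∑ i ∈ Finset.range (w.1.length + 1),
    Finsupp.single (⟨w.1.filter (· < i), isPermWord_filter_lt w.2 i⟩ : PW) (1 : ℤ) ⊗ₜ
      Finsupp.single
        (⟨stW (w.1.filter (fun x => i ≤ x)), isPermWord_stW_filter w.2 _⟩ : PW) (1 : ℤ)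

/-- The coproduct `δ` of the Malvenuto–Reutenauer Hopf algebra `ℤS`
(standardized unshuffling), as a `ℤ`-linear map. -/
noncomputable def Delta : ZS →ₗ[ℤ] ZS ⊗[ℤ] ZS :=
  Finsupp.lsum ℤ (fun w => LinearMap.toSpanSingleton ℤ _ (deltaWord w))

/-- The finite set of all permutation words of `{0,…,n-1}`. -/
def permsOf (n : ℕ) : Finset (List ℕ) := (List.range n).permutations.toFinset

section AuxCombinatorics
open List

lemma before_iff {w : List ℕ} {x y : ℕ} :
    (∃ k l : ℕ, k < l ∧ w[k]? = some x ∧ w[l]? = some y) ↔ [x, y] <+ w := by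
  constructor
  · rintro ⟨k, l, hkl, hx, hy⟩
    rw [List.getElem?_eq_some_iff] at hx hy
    obtain ⟨hk, hx⟩ := hx
    obtain ⟨hl, hy⟩ := hy
    have hdrop : x :: w.drop (k+1) <+ w := by
      have h1 : w.drop k <+ w := List.drop_sublist k w
      have h2 : w.drop k = x :: w.drop (k+1) := by
        rw [List.drop_eq_getElem_cons hk, hx]
      rwa [h2] at h1
    refine List.Sublist.trans ?_ hdrop
    apply List.cons_sublist_cons.2
    rw [List.singleton_sublist]
    have : (w.drop (k+1))[l - (k+1)]? = some y := by
      rw [List.getElem?_drop]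
      have : k + 1 + (l - (k+1)) = l := by omega
      rw [this, List.getElem?_eq_some_iff]
      exact ⟨hl, hy⟩
    obtain ⟨hl', rfl⟩ := List.getElem?_eq_some_iff.1 this
    exact List.getElem_mem hl'
  · intro h
    induction w with
    | nil => simp at h
    | cons a t ih =>
      rcases List.sublist_cons_iff.1 h with h' | ⟨r, hr, hrt⟩
      · obtain ⟨k, l, hkl, hx, hy⟩ := ih h'
        exact ⟨k+1, l+1, by omega, by simpa using hx, by simpa using hy⟩
      · have hxa : x = a ∧ r = [y] := by
          cases hr; exact ⟨rfl, rfl⟩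
        obtain ⟨rfl, rfl⟩ := hxa
        have hy : y ∈ t := (List.singleton_sublist.1 hrt)
        obtain ⟨m, hm⟩ := List.getElem?_of_mem hy
        exact ⟨0, m+1, by omega, by simp, by simpa using hm⟩

lemma mem_invSet_iff {w : List ℕ} {b a : ℕ} :
    (b, a) ∈ invSet w ↔ a < b ∧ [b, a] <+ w := by
  unfold invSet
  simp only [Set.mem_setOf_eq]
  rw [before_iff]

lemma pair_sublist_filter_iff {w : List ℕ} {p : ℕ → Bool} {b a : ℕ} :
    [b, a] <+ w.filter p ↔ [b, a] <+ w ∧ p b ∧ p a := by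
  constructor
  · intro h
    have hb : b ∈ w.filter p := h.subset (by simp)
    have ha : a ∈ w.filter p := h.subset (by simp)
    rw [List.mem_filter] at hb ha
    exact ⟨h.trans (List.filter_sublist), hb.2, ha.2⟩
  · rintro ⟨h, hb, ha⟩
    have := List.Sublist.filter p h
    rwa [show List.filter p [b, a] = [b, a] by simp [hb, ha]] at this

lemma mem_invSet_filter_iff {w : List ℕ} {p : ℕ → Bool} {b a : ℕ} :
    (b, a) ∈ invSet (w.filter p) ↔ (b, a) ∈ invSet w ∧ p b ∧ p a := by
  simp only [mem_invSet_iff, pair_sublist_filter_iff]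
  tauto

lemma mem_invSet_map_add {w : List ℕ} {i b a : ℕ} :
    (b, a) ∈ invSet (w.map (· + i)) ↔ i ≤ a ∧ i ≤ b ∧ (b - i, a - i) ∈ invSet w := by
  simp only [mem_invSet_iff]
  constructor
  · rintro ⟨hab, hs⟩
    obtain ⟨l', hl', he⟩ := List.sublist_map_iff.1 hs
    match l', he with
    | [x, y], he =>
      simp only [List.map_cons, List.map_nil, List.cons.injEq, and_true] at he
      obtain ⟨rfl, rfl, -⟩ := he
      refine ⟨by omega, by omega, by omega, by simpa using hl'⟩
  · rintro ⟨ha, hb, hab, hs⟩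
    have := hs.map (· + i)
    simp only [List.map_cons, List.map_nil] at this
    rw [Nat.sub_add_cancel hb, Nat.sub_add_cancel ha] at this
    exact ⟨by omega, this⟩

lemma mem_invSet_map_sub {w : List ℕ} {i q p' : ℕ} (hw : ∀ x ∈ w, i ≤ x) :
    (q, p') ∈ invSet (w.map (· - i)) ↔ (q + i, p' + i) ∈ invSet w := by
  simp only [mem_invSet_iff]
  constructor
  · rintro ⟨hpq, hs⟩
    obtain ⟨l', hl', he⟩ := List.sublist_map_iff.1 hs
    match l', he with
    | [x, y], he =>
      simp only [List.map_cons, List.map_nil, List.cons.injEq, and_true] at he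
      obtain ⟨rfl, rfl, -⟩ := he
      have hx : i ≤ x := hw x (hl'.subset (by simp))
      have hy : i ≤ y := hw y (hl'.subset (by simp))
      have hxe : x - i + i = x := Nat.sub_add_cancel hx
      have hye : y - i + i = y := Nat.sub_add_cancel hy
      rw [hxe, hye]
      exact ⟨by omega, hl'⟩
  · rintro ⟨hpq, hs⟩
    have := hs.map (· - i)
    simp only [List.map_cons, List.map_nil, Nat.add_sub_cancel] at this
    exact ⟨by omega, this⟩

lemma pair_sublist_append_iff {s t : List ℕ} {b a : ℕ} :
    [b, a] <+ s ++ t ↔ [b, a] <+ s ∨ [b, a] <+ t ∨ (b ∈ s ∧ a ∈ t) := by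
  rw [List.sublist_append_iff]
  constructor
  · rintro ⟨l₁, l₂, he, h₁, h₂⟩
    match l₁, l₂, he with
    | [], _, he => simp at he; subst he; exact Or.inr (Or.inl h₂)
    | [x], l₂, he =>
      simp only [List.cons_append, List.nil_append, List.cons.injEq] at he
      obtain ⟨rfl, rfl⟩ := he
      exact Or.inr (Or.inr ⟨List.singleton_sublist.1 h₁, by
        simpa using h₂.subset (by simp)⟩)
    | x :: y :: l₁, l₂, he =>
      simp only [List.cons_append, List.cons.injEq] at he
      obtain ⟨rfl, rfl, he⟩ := he
      have : l₁ = [] ∧ l₂ = [] := by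
        have := congrArg List.length he
        simp at this
        constructor <;> [skip; skip] <;>
          (first | exact List.eq_nil_of_length_eq_zero (by omega))
      obtain ⟨rfl, rfl⟩ := this
      simp only [List.nil_append] at he
      exact Or.inl h₁
  · rintro (h | h | ⟨hb, ha⟩)
    · exact ⟨[b, a], [], by simp, h, by simp⟩
    · exact ⟨[], [b, a], by simp, by simp, h⟩
    · exact ⟨[b], [a], by simp, List.singleton_sublist.2 hb, List.singleton_sublist.2 ha⟩

lemma pair_sublist_cons_iff {a' x y : ℕ} {t : List ℕ} :
    [x, y] <+ a' :: t ↔ (x = a' ∧ y ∈ t) ∨ [x, y] <+ t := by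
  rw [List.sublist_cons_iff]
  constructor
  · rintro (h | ⟨r, hr, hrt⟩)
    · exact Or.inr h
    · simp only [List.cons.injEq] at hr
      obtain ⟨rfl, hr⟩ := hr
      subst hr
      exact Or.inl ⟨rfl, by simpa using hrt.subset (by simp)⟩
  · rintro (⟨rfl, hy⟩ | h)
    · exact Or.inr ⟨[y], rfl, List.singleton_sublist.2 hy⟩
    · exact Or.inl h

lemma eq_of_invSet_eq : ∀ {u w : List ℕ}, u.Perm w → u.Nodup →
    invSet u = invSet w → u = w := by
  intro u
  induction u with
  | nil => intro w hp _ _; exact (hp.nil_eq).symm ▸ rfl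
  | cons a u' ih =>
    intro w hp hnd hinv
    match w with
    | [] => exact absurd hp.length_eq (by simp)
    | b :: w' =>
      have hndw : (b :: w').Nodup := hp.nodup_iff.1 hnd
      have hab : a = b := by
        by_contra hne
        have hbu : b ∈ a :: u' := hp.mem_iff.2 (by simp)
        have haw : a ∈ b :: w' := hp.mem_iff.1 (by simp)
        have hbu' : b ∈ u' := by
          rcases hbu with _ | h
          · exact absurd rfl hne
          · assumption
        have haw' : a ∈ w' := by
          rcases haw with _ | h
          · exact absurd rfl (fun h => hne h.symm)
          · assumption
        rcases Nat.lt_or_ge a b with hlt | hge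
        · -- (b, a) ∈ invSet (b :: w') since b first; so ∈ invSet (a :: u')
          have h1 : (b, a) ∈ invSet (b :: w') := by
            rw [mem_invSet_iff]
            exact ⟨hlt, List.cons_sublist_cons.2 (List.singleton_sublist.2 haw')⟩
          rw [← hinv, mem_invSet_iff] at h1
          rcases pair_sublist_cons_iff.1 h1.2 with ⟨hba, _⟩ | h2
          · exact hne hba.symm
          · have : a ∈ u' := h2.subset (by simp)
            exact (List.nodup_cons.1 hnd).1 this
        · have hlt : b < a := lt_of_le_of_ne hge (fun h => hne h.symm)
          have h1 : (a, b) ∈ invSet (a :: u') := by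
            rw [mem_invSet_iff]
            exact ⟨hlt, List.cons_sublist_cons.2 (List.singleton_sublist.2 hbu')⟩
          rw [hinv, mem_invSet_iff] at h1
          rcases pair_sublist_cons_iff.1 h1.2 with ⟨hab, _⟩ | h2
          · exact hne hab
          · have : b ∈ w' := h2.subset (by simp)
            exact (List.nodup_cons.1 hndw).1 this
      subst hab
      have hp' : u'.Perm w' := (List.perm_cons a).1 hp
      have hnd' : u'.Nodup := (List.nodup_cons.1 hnd).2
      have hanu : a ∉ u' := (List.nodup_cons.1 hnd).1
      have hanw : a ∉ w' := (List.nodup_cons.1 hndw).1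
      have hinv' : invSet u' = invSet w' := by
        ext ⟨x, y⟩
        simp only [mem_invSet_iff]
        constructor
        · rintro ⟨hxy, hs⟩
          have hxu : x ∈ u' := hs.subset (by simp)
          have h1 : (x, y) ∈ invSet (a :: u') := by
            rw [mem_invSet_iff]
            exact ⟨hxy, (pair_sublist_cons_iff).2 (Or.inr hs)⟩
          rw [hinv, mem_invSet_iff] at h1
          rcases pair_sublist_cons_iff.1 h1.2 with ⟨hxa, _⟩ | h2
          · exact absurd (hxa ▸ hxu) hanu
          · exact ⟨hxy, h2⟩
        · rintro ⟨hxy, hs⟩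
          have hxw : x ∈ w' := hs.subset (by simp)
          have h1 : (x, y) ∈ invSet (a :: w') := by
            rw [mem_invSet_iff]
            exact ⟨hxy, (pair_sublist_cons_iff).2 (Or.inr hs)⟩
          rw [← hinv, mem_invSet_iff] at h1
          rcases pair_sublist_cons_iff.1 h1.2 with ⟨hxa, _⟩ | h2
          · exact absurd (hxa ▸ hxw) hanw
          · exact ⟨hxy, h2⟩
      rw [ih hp' hnd' hinv']

lemma weakLe_refl (w : List ℕ) : weakLe w w := Set.Subset.refl _

lemma weakLe_trans {u v w : List ℕ} (h1 : weakLe u v) (h2 : weakLe v w) : weakLe u w :=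
  Set.Subset.trans h1 h2

lemma weakLe_antisymm {u w : List ℕ} (hp : u.Perm w) (hnd : u.Nodup)
    (h1 : weakLe u w) (h2 : weakLe w u) : u = w :=
  eq_of_invSet_eq hp hnd (Set.Subset.antisymm h1 h2)

lemma filter_lt_range (n z : ℕ) :
    (List.range n).filter (fun y => decide (y < z)) = List.range (min z n) := by
  induction n with
  | zero => simp
  | succ n ih =>
    rw [List.range_succ, List.filter_append, ih]
    by_cases h : n < z
    · have h1 : min z (n+1) = n + 1 := by omega
      have h2 : min z n = n := by omega
      simp [h, h1, h2, List.range_succ]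
    · have h1 : min z (n+1) = min z n := by omega
      simp [h, h1]

lemma filter_ge_range {n i : ℕ} (h : i ≤ n) :
    (List.range n).filter (fun x => decide (i ≤ x)) = (List.range (n - i)).map (· + i) := by
  have hn : n = i + (n - i) := by omega
  rw [show List.range n = List.range (i + (n-i)) by rw [← hn], List.range_add,
    List.filter_append]
  have h1 : (List.range i).filter (fun x => decide (i ≤ x)) = [] := by
    apply List.filter_eq_nil_iff.2
    intro x hx
    simp only [List.mem_range] at hx
    simp [Nat.not_le.2 hx]
  have h2 : ((List.range (n-i)).map (fun x => i + x)).filter (fun x => decide (i ≤ x)) =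
      (List.range (n-i)).map (fun x => i + x) := by
    apply List.filter_eq_self.2
    intro x hx
    simp only [List.mem_map] at hx
    obtain ⟨y, _, rfl⟩ := hx
    simp
  rw [h1, h2, List.nil_append]
  apply List.map_congr_left
  intro x _
  omega

lemma mem_iff_lt_of_perm_range {w : List ℕ} {n : ℕ} (h : w.Perm (List.range n)) {x : ℕ} :
    x ∈ w ↔ x < n := by
  rw [h.mem_iff, List.mem_range]

lemma stW_eq_map_sub {w : List ℕ} {m i : ℕ} (h : w.Perm ((List.range m).map (· + i))) :
    stW w = w.map (· - i) := by
  apply List.map_congr_left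
  intro x hx
  have hx' : x ∈ (List.range m).map (· + i) := h.mem_iff.1 hx
  simp only [List.mem_map, List.mem_range] at hx'
  obtain ⟨z, hz, rfl⟩ := hx'
  have hperm : (w.filter (· < z + i)).Perm
      (((List.range m).map (· + i)).filter (· < z + i)) := h.filter _
  rw [hperm.length_eq]
  have : ((List.range m).map (· + i)).filter (· < z + i) =
      ((List.range m).filter (fun y => decide (y < z))).map (· + i) := by
    rw [List.filter_map]
    congr 1
    apply List.filter_congr
    intro y _
    simp only [Function.comp_apply]
    congr 1
    simp [Nat.add_lt_add_iff_right]
  rw [this, List.length_map, filter_lt_range, List.length_range]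
  simp only [Nat.add_sub_cancel]
  omega

lemma key_lemma {σ u v : List ℕ} {n i : ℕ} (hi : i ≤ n)
    (hσ : σ.Perm (List.range n)) (hu : u.Perm (List.range i))
    (hv : v.Perm (List.range (n - i))) :
    weakLe σ (triangle v u) ↔
      weakLe (σ.filter (· < i)) u ∧ weakLe (stW (σ.filter (fun x => i ≤ x))) v := by
  have hulen : u.length = i := by rw [hu.length_eq, List.length_range]
  set w2 := σ.filter (fun x => i ≤ x) with hw2
  have hw2perm : w2.Perm ((List.range (n - i)).map (· + i)) := by
    have h1 : w2.Perm ((List.range n).filter (fun x => decide (i ≤ x))) := hσ.filter _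
    rwa [filter_ge_range hi] at h1
  have hw2mem : ∀ x ∈ w2, i ≤ x := by
    intro x hx
    have := (List.mem_filter.1 hx).2
    simpa using this
  have hstW : stW w2 = w2.map (· - i) := stW_eq_map_sub hw2perm
  have htri : triangle v u = v.map (· + i) ++ u := by
    rw [triangle, hulen]
  constructor
  · intro h
    constructor
    · rintro ⟨b, a⟩ hba
      rw [mem_invSet_filter_iff] at hba
      obtain ⟨hba, hb, ha⟩ := hba
      simp only [decide_eq_true_eq] at hb ha
      have h2 := h hba
      rw [htri, mem_invSet_iff, pair_sublist_append_iff] at h2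
      obtain ⟨hab, hc | hc | ⟨hbm, _⟩⟩ := h2
      · have : b ∈ v.map (· + i) := hc.subset (by simp)
        simp only [List.mem_map] at this
        obtain ⟨y, _, rfl⟩ := this
        omega
      · exact mem_invSet_iff.2 ⟨hab, hc⟩
      · simp only [List.mem_map] at hbm
        obtain ⟨y, _, rfl⟩ := hbm
        omega
    · rintro ⟨q, p⟩ hqp
      rw [hstW, mem_invSet_map_sub hw2mem, mem_invSet_filter_iff] at hqp
      obtain ⟨hqp, -, -⟩ := hqp
      have h2 := h hqp
      rw [htri, mem_invSet_iff, pair_sublist_append_iff] at h2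
      obtain ⟨hab, hc | hc | ⟨_, ham⟩⟩ := h2
      · have : (q + i, p + i) ∈ invSet (v.map (· + i)) := mem_invSet_iff.2 ⟨hab, hc⟩
        rw [mem_invSet_map_add] at this
        simpa using this.2.2
      · have : p + i ∈ u := hc.subset (by simp)
        rw [mem_iff_lt_of_perm_range hu] at this
        omega
      · rw [mem_iff_lt_of_perm_range hu] at ham
        omega
  · rintro ⟨h1, h2⟩ ⟨b, a⟩ hba
    have hab : a < b := (mem_invSet_iff.1 hba).1
    have hbn : b < n := by
      rw [← mem_iff_lt_of_perm_range hσ]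
      exact (mem_invSet_iff.1 hba).2.subset (by simp)
    rw [htri, mem_invSet_iff, pair_sublist_append_iff]
    refine ⟨hab, ?_⟩
    rcases Nat.lt_or_ge b i with hbi | hbi
    · -- both < i
      have : (b, a) ∈ invSet (σ.filter (· < i)) := by
        rw [mem_invSet_filter_iff]
        exact ⟨hba, by simp [hbi], by simp; omega⟩
      have := h1 this
      exact Or.inr (Or.inl (mem_invSet_iff.1 this).2)
    · rcases Nat.lt_or_ge a i with hai | hai
      · -- cross
        refine Or.inr (Or.inr ⟨?_, ?_⟩)
        · simp only [List.mem_map]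
          exact ⟨b - i, by rw [mem_iff_lt_of_perm_range hv]; omega, by omega⟩
        · rw [mem_iff_lt_of_perm_range hu]; exact hai
      · -- both ≥ i
        have hmem : (b, a) ∈ invSet w2 := by
          rw [hw2, mem_invSet_filter_iff]
          exact ⟨hba, by simp [hbi], by simp [hai]⟩
        have : (b - i, a - i) ∈ invSet (stW w2) := by
          rw [hstW, mem_invSet_map_sub hw2mem, Nat.sub_add_cancel hbi,
            Nat.sub_add_cancel hai]
          exact hmem
        have := h2 this
        have hs := (mem_invSet_iff.1 this).2
        have := hs.map (· + i)
        simp only [List.map_cons, List.map_nil] at this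
        rw [Nat.sub_add_cancel hbi, Nat.sub_add_cancel hai] at this
        exact Or.inl this

end AuxCombinatorics

section AuxAlgebra
open List

lemma mem_permsOf {w : List ℕ} {n : ℕ} : w ∈ permsOf n ↔ w.Perm (List.range n) := by
  rw [permsOf, List.mem_toFinset, List.mem_permutations]

lemma length_of_mem_permsOf {w : List ℕ} {n : ℕ} (h : w ∈ permsOf n) : w.length = n := by
  have := (mem_permsOf.1 h).length_eq
  simpa using this

lemma isPermWord_of_mem_permsOf {w : List ℕ} {n : ℕ} (h : w ∈ permsOf n) : IsPermWord w := by
  unfold IsPermWord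
  rw [length_of_mem_permsOf h]
  exact mem_permsOf.1 h

lemma self_mem_permsOf (σ : PW) : σ.1 ∈ permsOf σ.1.length := mem_permsOf.2 σ.2

lemma triangle_perm {u v : List ℕ} {i m : ℕ} (hu : u.Perm (List.range i))
    (hv : v.Perm (List.range m)) : (triangle v u).Perm (List.range (i + m)) := by
  have hul : u.length = i := by simpa using hu.length_eq
  rw [triangle, hul, List.range_add]
  calc v.map (· + i) ++ u ~ u ++ v.map (· + i) := List.perm_append_comm
    _ ~ List.range i ++ (List.range m).map (fun x => i + x) := by
        refine List.Perm.append hu ?_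
        have h1 : v.map (· + i) ~ (List.range m).map (· + i) := hv.map _
        have h2 : (List.range m).map (· + i) = (List.range m).map (fun x => i + x) :=
          List.map_congr_left (fun a _ => Nat.add_comm a i)
        rwa [h2] at h1

lemma filter_lt_len {σ : List ℕ} {n : ℕ} (hσ : σ.Perm (List.range n)) {i : ℕ} (hi : i ≤ n) :
    (σ.filter (· < i)).length = i := by
  rw [(hσ.filter (· < i)).length_eq, filter_lt_range, List.length_range]
  omega

lemma stW_filter_ge_len {σ : List ℕ} {n : ℕ} (hσ : σ.Perm (List.range n)) {i : ℕ} (hi : i ≤ n) :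
    (stW (σ.filter (fun x => i ≤ x))).length = n - i := by
  rw [stW, List.length_map, (hσ.filter _).length_eq, filter_ge_range hi,
    List.length_map, List.length_range]

lemma Delta_single (σ : PW) : Delta (Finsupp.single σ (1 : ℤ)) = deltaWord σ := by
  rw [Delta, Finsupp.lsum_single, LinearMap.toSpanSingleton_apply_one]

/-- The right-hand side of the main theorem, as a function of the word. -/
noncomputable def Fsum (M : List ℕ → ZS) (w : List ℕ) : ZS ⊗[ℤ] ZS :=
  ∑ i ∈ Finset.range (w.length + 1),
    ∑ u ∈ permsOf i, ∑ v ∈ permsOf (w.length - i),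
      if w = triangle v u then M u ⊗ₜ[ℤ] M v else 0

end AuxAlgebra

section AuxMain

open scoped Classical in
lemma lemmaA (M : List ℕ → ZS)
    (hM : ∀ σ : PW, Finsupp.single σ (1 : ℤ) =
      ∑ w ∈ permsOf σ.1.length, if weakLe σ.1 w then M w else 0)
    (σ : PW) :
    (∑ w ∈ permsOf σ.1.length, if weakLe σ.1 w then Delta (M w) else 0) =
      ∑ w ∈ permsOf σ.1.length, if weakLe σ.1 w then Fsum M w else 0 := by
  classical
  have hσ : σ.1.Perm (List.range σ.1.length) := σ.2
  set n := σ.1.length with hn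
  have hM' : ∀ (w : List ℕ) (hw : IsPermWord w),
      (Finsupp.single (⟨w, hw⟩ : PW) (1 : ℤ) : ZS) =
        ∑ x ∈ permsOf w.length, if weakLe w x then M x else 0 := fun w hw => hM ⟨w, hw⟩
  have hL : (∑ w ∈ permsOf n, if weakLe σ.1 w then Delta (M w) else 0) =
      ∑ i ∈ Finset.range (n + 1), ∑ u ∈ permsOf i, ∑ v ∈ permsOf (n - i),
        if weakLe σ.1 (triangle v u) then M u ⊗ₜ[ℤ] M v else 0 := by
    have h0 : Delta (Finsupp.single σ (1 : ℤ)) =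
        ∑ w ∈ permsOf n, if weakLe σ.1 w then Delta (M w) else 0 := by
      rw [hM σ, map_sum]
      exact Finset.sum_congr rfl (fun w _ => by split_ifs <;> simp)
    rw [← h0, Delta_single, deltaWord]
    apply Finset.sum_congr rfl
    intro i hi
    rw [Finset.mem_range] at hi
    have hi' : i ≤ n := by omega
    have hA := hM' (σ.1.filter (· < i)) (isPermWord_filter_lt σ.2 i)
    have hB := hM' (stW (σ.1.filter (fun x => i ≤ x))) (isPermWord_stW_filter σ.2 _)
    rw [filter_lt_len hσ hi'] at hA
    rw [stW_filter_ge_len hσ hi'] at hB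
    rw [hA, hB, TensorProduct.sum_tmul]
    apply Finset.sum_congr rfl
    intro u hu
    rw [TensorProduct.tmul_sum]
    apply Finset.sum_congr rfl
    intro v hv
    have hup : u.Perm (List.range i) := mem_permsOf.1 hu
    have hvp : v.Perm (List.range (n - i)) := mem_permsOf.1 hv
    have hiff := key_lemma hi' hσ hup hvp
    by_cases hp : weakLe (σ.1.filter (· < i)) u
    · by_cases hq : weakLe (stW (σ.1.filter (fun x => i ≤ x))) v
      · rw [if_pos hp, if_pos hq, if_pos (hiff.2 ⟨hp, hq⟩)]
      · rw [if_pos hp, if_neg hq, if_neg (fun h => hq (hiff.1 h).2),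
          TensorProduct.tmul_zero]
    · rw [if_neg hp, if_neg (fun h => hp (hiff.1 h).1), TensorProduct.zero_tmul]
  have hR : (∑ w ∈ permsOf n, if weakLe σ.1 w then Fsum M w else 0) =
      ∑ i ∈ Finset.range (n + 1), ∑ u ∈ permsOf i, ∑ v ∈ permsOf (n - i),
        if weakLe σ.1 (triangle v u) then M u ⊗ₜ[ℤ] M v else 0 := by
    have step1 : ∀ w ∈ permsOf n, (if weakLe σ.1 w then Fsum M w else 0) =
        ∑ i ∈ Finset.range (n + 1), ∑ u ∈ permsOf i, ∑ v ∈ permsOf (n - i),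
          if w = triangle v u then (if weakLe σ.1 w then M u ⊗ₜ[ℤ] M v else 0) else 0 := by
      intro w hw
      have hwl : w.length = n := length_of_mem_permsOf hw
      rw [Fsum, hwl]
      split_ifs with hc
      · apply Finset.sum_congr rfl; intro i _
        apply Finset.sum_congr rfl; intro u _
        apply Finset.sum_congr rfl; intro v _
        rfl
      · simp [hc]
    rw [Finset.sum_congr rfl step1, Finset.sum_comm]
    apply Finset.sum_congr rfl
    intro i hi
    rw [Finset.mem_range] at hi
    rw [Finset.sum_comm]
    apply Finset.sum_congr rfl
    intro u hu
    rw [Finset.sum_comm]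
    apply Finset.sum_congr rfl
    intro v hv
    have htr : triangle v u ∈ permsOf n := by
      apply mem_permsOf.2
      have := triangle_perm (mem_permsOf.1 hu) (mem_permsOf.1 hv)
      rwa [Nat.add_sub_cancel' (by omega : i ≤ n)] at this
    rw [Finset.sum_ite_eq' (permsOf n) (triangle v u)
        (fun w => if weakLe σ.1 w then M u ⊗ₜ[ℤ] M v else 0), if_pos htr]
  rw [hL, hR]

open scoped Classical in
lemma lemmaB (M : List ℕ → ZS)
    (hM : ∀ σ : PW, Finsupp.single σ (1 : ℤ) =
      ∑ w ∈ permsOf σ.1.length, if weakLe σ.1 w then M w else 0) :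
    ∀ (N : ℕ) (σ : PW),
      ((permsOf σ.1.length).filter (fun w => weakLe σ.1 w)).card ≤ N →
      Delta (M σ.1) = Fsum M σ.1 := by
  intro N
  induction N with
  | zero =>
    intro σ hcard
    exfalso
    have hmem : σ.1 ∈ (permsOf σ.1.length).filter (fun w => weakLe σ.1 w) :=
      Finset.mem_filter.2 ⟨self_mem_permsOf σ, weakLe_refl _⟩
    have := Finset.card_pos.2 ⟨σ.1, hmem⟩
    omega
  | succ N ih =>
    intro σ hcard
    have hA := lemmaA M hM σ
    rw [← Finset.sum_filter, ← Finset.sum_filter] at hA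
    set T := (permsOf σ.1.length).filter (fun w => weakLe σ.1 w) with hT
    have hmem : σ.1 ∈ T := Finset.mem_filter.2 ⟨self_mem_permsOf σ, weakLe_refl _⟩
    rw [← Finset.add_sum_erase _ _ hmem, ← Finset.add_sum_erase _ _ hmem] at hA
    have herase : ∀ w ∈ T.erase σ.1, Delta (M w) = Fsum M w := by
      intro w hw
      have hw' : w ∈ T := Finset.mem_of_mem_erase hw
      have hne : w ≠ σ.1 := Finset.ne_of_mem_erase hw
      rw [hT, Finset.mem_filter] at hw'
      obtain ⟨hwP, hle⟩ := hw'
      have hwp : IsPermWord w := isPermWord_of_mem_permsOf hwP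
      have hwl : w.length = σ.1.length := length_of_mem_permsOf hwP
      have hperm : w.Perm σ.1 := by
        have h1 : w.Perm (List.range σ.1.length) := by
          have := hwp; unfold IsPermWord at this; rwa [hwl] at this
        exact h1.trans σ.2.symm
      have hssub : (permsOf w.length).filter (fun x => weakLe w x) ⊂ T := by
        rw [hT, hwl]
        constructor
        · intro x hx
          rw [Finset.mem_filter] at hx ⊢
          exact ⟨hx.1, weakLe_trans hle hx.2⟩
        · intro hcon
          have h1 : σ.1 ∈ (permsOf σ.1.length).filter (fun x => weakLe w x) :=
            hcon (hT ▸ hmem)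
          rw [Finset.mem_filter] at h1
          have := weakLe_antisymm hperm (nodup_of_isPermWord hwp) h1.2 hle
          exact hne this
      have hlt : ((permsOf w.length).filter (fun x => weakLe w x)).card < T.card :=
        Finset.card_lt_card hssub
      exact ih ⟨w, hwp⟩
        (show ((permsOf w.length).filter (fun x => weakLe w x)).card ≤ N by omega)
    rw [Finset.sum_congr rfl herase] at hA
    exact add_right_cancel hA

end AuxMain

open scoped Classical in
/-- Let `(M_σ)` be the monomial basis of `ℤS`, defined by
`σ = Σ_{σ ≤ w} M_w` (Möbius inversion over the right weak order).  Then
`δ(M_σ) = Σ_{σ = v △ u} M_u ⊗ M_v`, the sum over all factorizations of `σ`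
as a left shifted concatenation. -/
theorem delta_monomial_basis (M : List ℕ → ZS)
    (hM : ∀ σ : PW, Finsupp.single σ (1 : ℤ) =
      ∑ w ∈ permsOf σ.1.length, if weakLe σ.1 w then M w else 0) :
    ∀ σ : PW, Delta (M σ.1) =
      ∑ i ∈ Finset.range (σ.1.length + 1),
        ∑ u ∈ permsOf i, ∑ v ∈ permsOf (σ.1.length - i),
          if σ.1 = triangle v u then M u ⊗ₜ[ℤ] M v else 0 := by
  intro σ
  have h := lemmaB M hM
    ((permsOf σ.1.length).filter (fun w => weakLe σ.1 w)).card σ le_rfl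
  rw [h, Fsum]
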